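/- Let f ∈ ℤ[X] with 0 < |f(a)| < |f(b)| for integers a, b, let k ≥ 1, and let q_k = max{ d₂/d₁ : d₁ an admissible divisor of f(a), d₂ an admissible divisor of f(b), d₂/d₁ ≤ (|f(b)|/|f(a)|)^(1/(k+1)) }. If q_k > 1 and every complex root θ of f satisfies |b − θ| > q_k·|a − θ|, then f is a product of at most k irreducible factors over ℚ (counting multiplicities of nonconstant irreducible factors). -/

import Mathlib

open Polynomial Real

noncomputable section

/-- `d` is an admissible divisor of `f(a)`. -/
def AdmDiv (f : Polynomial ℤ) (a d : ℤ) : Prop :=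
  d ∣ f.eval a ∧
    Int.gcd d (f.eval a / d) ∣ Int.gcd (f.eval a) (f.derivative.eval a)

/-- `d` is a unitary divisor of `N`. -/
def UnitDiv (N d : ℤ) : Prop := d ∣ N ∧ Int.gcd d (N / d) = 1

/-- `f` is a product of at most `k` nonconstant irreducible factors over `ℚ`
(counting multiplicities): it cannot be written as a product of `k + 1`
nonconstant polynomials over `ℚ`. -/
def FactorsAtMost (f : Polynomial ℤ) (k : ℕ) : Prop :=
  ∀ g : Fin (k + 1) → Polynomial ℚ, (∀ i, 0 < (g i).natDegree) →
    f.map (Int.castRingHom ℚ) ≠ ∏ i, g i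

/-- `q` is the quantity `q_k` of the paper: the greatest ratio `d₂/d₁` of
admissible divisors of `f(b)` and `f(a)` not exceeding `(|f(b)|/|f(a)|)^(1/(k+1))`. -/
def IsQk (f : Polynomial ℤ) (a b : ℤ) (k : ℕ) (q : ℝ) : Prop :=
  IsGreatest {x : ℝ | ∃ d₁ d₂ : ℤ, AdmDiv f a d₁ ∧ AdmDiv f b d₂ ∧
    x = (d₂ : ℝ) / (d₁ : ℝ) ∧
    x ≤ (|((f.eval b : ℤ) : ℝ)| / |((f.eval a : ℤ) : ℝ)|) ^ ((k + 1 : ℝ))⁻¹} q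

/-- `q` is the quantity `q^u_k` of the paper, defined via unitary divisors. -/
def IsQuk (f : Polynomial ℤ) (a b : ℤ) (k : ℕ) (q : ℝ) : Prop :=
  IsGreatest {x : ℝ | ∃ d₁ d₂ : ℤ, UnitDiv (f.eval a) d₁ ∧ UnitDiv (f.eval b) d₂ ∧
    x = (d₂ : ℝ) / (d₁ : ℝ) ∧
    x ≤ (|((f.eval b : ℤ) : ℝ)| / |((f.eval a : ℤ) : ℝ)|) ^ ((k + 1 : ℝ))⁻¹} q

/- ### Auxiliary lemmas -/

lemma primPart_prod' {ι : Type*} (s : Finset ι) (h : ι → Polynomial ℤ)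
    (hs : ∀ i ∈ s, h i ≠ 0) :
    (∏ i ∈ s, h i).primPart = ∏ i ∈ s, (h i).primPart := by
  classical
  induction s using Finset.induction with
  | empty => simpa using Polynomial.isPrimitive_one.primPart_eq
  | @insert a s hni ih =>
      rw [Finset.prod_insert hni, Finset.prod_insert hni,
        Polynomial.primPart_mul
          (mul_ne_zero (hs a (Finset.mem_insert_self a s))
            (Finset.prod_ne_zero_iff.2 fun i hi => hs i (Finset.mem_insert_of_mem hi))),
        ih fun i hi => hs i (Finset.mem_insert_of_mem hi)]

lemma exists_int_factorization {m : ℕ} (f : Polynomial ℤ) (hf : f ≠ 0)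
    (g : Fin (m+1) → Polynomial ℚ)
    (hfg : f.map (Int.castRingHom ℚ) = ∏ i, g i) :
    ∃ H : Fin (m+1) → Polynomial ℤ, f = ∏ i, H i ∧
      ∀ i, (H i).natDegree = (g i).natDegree := by
  classical
  have key : ∀ i : Fin (m+1), ∃ (h : Polynomial ℤ) (c : ℤ), c ≠ 0 ∧
      h.map (Int.castRingHom ℚ) = C (c : ℚ) * g i := by
    intro i
    obtain ⟨b, hb⟩ := IsLocalization.integerNormalization_map_to_map
      (nonZeroDivisors ℤ) (S := ℚ) (g i)
    refine ⟨IsLocalization.integerNormalization (nonZeroDivisors ℤ) (g i), (b : ℤ),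
      nonZeroDivisors.coe_ne_zero b, ?_⟩
    rw [show Int.castRingHom ℚ = algebraMap ℤ ℚ from rfl, hb, Algebra.smul_def]
    simp [algebraMap_int_eq, map_intCast]
  choose h c hc0 hmap using key
  set B : ℤ := ∏ i, c i with hB
  have hBne : B ≠ 0 := Finset.prod_ne_zero_iff.2 fun i _ => hc0 i
  have hprod : ∏ i, h i = C B * f := by
    apply Polynomial.map_injective (Int.castRingHom ℚ) Int.cast_injective
    rw [Polynomial.map_mul, Polynomial.map_prod, Polynomial.map_C, hfg]
    simp only [hmap]
    rw [Finset.prod_mul_distrib]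
    congr 1
    rw [← map_prod (C : ℚ →+* Polynomial ℚ)]
    congr 1
    rw [eq_intCast, Int.cast_prod]
  have hne : ∀ i : Fin (m+1), h i ≠ 0 := by
    intro i hi
    apply mul_ne_zero (Polynomial.C_ne_zero.2 hBne) hf
    rw [← hprod, ← Finset.prod_erase_mul _ _ (Finset.mem_univ i), hi, mul_zero]
  have hcf : f.content ≠ 0 := by simpa [Polynomial.content_eq_zero_iff] using hf
  set P : Fin (m+1) → Polynomial ℤ := fun i => (h i).primPart with hP
  have e1 : C B * f = C (|B| * f.content) * ∏ i, P i := by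
    have h1 := Polynomial.eq_C_content_mul_primPart (∏ i, h i)
    rw [primPart_prod' _ _ (fun i _ => hne i), hprod] at h1
    rw [h1, Polynomial.content_C_mul, ← Int.abs_eq_normalize]
  set e : ℤ := if 0 < B then f.content else -f.content with he
  have hene : e ≠ 0 := by
    rw [he]; split <;> simpa using hcf
  have e2 : f = C e * ∏ i, P i := by
    have h2 : C B * f = C B * (C e * ∏ i, P i) := by
      rw [e1, ← mul_assoc, ← Polynomial.C_mul]
      congr 2
      rcases lt_trichotomy B 0 with hB0 | hB0 | hB0
      · rw [abs_of_neg hB0, he, if_neg (not_lt.2 hB0.le)]; ring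
      · exact absurd hB0 hBne
      · rw [abs_of_pos hB0, he, if_pos hB0]
    exact mul_left_cancel₀ (Polynomial.C_ne_zero.2 hBne) h2
  have hdegP : ∀ i, (P i).natDegree = (g i).natDegree := by
    intro i
    rw [hP]
    dsimp only
    rw [Polynomial.natDegree_primPart]
    have h3 := Polynomial.natDegree_map_eq_of_injective
      (f := Int.castRingHom ℚ) Int.cast_injective (h i)
    rw [← h3, hmap i, Polynomial.natDegree_C_mul (by exact_mod_cast hc0 i)]
  refine ⟨Function.update P 0 (C e * P 0), ?_, ?_⟩
  · rw [e2, Fin.prod_univ_succ, Fin.prod_univ_succ, Function.update_self, mul_assoc]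
    have hup : ∀ i : Fin m, Function.update P 0 (C e * P 0) i.succ = P i.succ :=
      fun i => Function.update_of_ne (Fin.succ_ne_zero i) _ _
    simp only [hup]
  · intro i
    rcases eq_or_ne i 0 with rfl | hi
    · rw [Function.update_self, Polynomial.natDegree_C_mul hene, hdegP]
    · rw [Function.update_of_ne hi]; exact hdegP i

lemma admDiv_of_eq (f H G : Polynomial ℤ) (a : ℤ) (hfa : f.eval a ≠ 0)
    (hf : f = H * G) : AdmDiv f a (H.eval a) := by
  have hev : f.eval a = H.eval a * G.eval a := by rw [hf, Polynomial.eval_mul]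
  have hH0 : H.eval a ≠ 0 := fun h => hfa (by rw [hev, h, zero_mul])
  constructor
  · exact ⟨G.eval a, hev⟩
  · have hdiv : f.eval a / H.eval a = G.eval a := by
      rw [hev, Int.mul_ediv_cancel_left _ hH0]
    rw [hdiv]
    have h1 : (Int.gcd (H.eval a) (G.eval a) : ℤ) ∣ f.eval a := by
      rw [hev]; exact dvd_mul_of_dvd_left (Int.gcd_dvd_left _ _) _
    have h2 : (Int.gcd (H.eval a) (G.eval a) : ℤ) ∣ f.derivative.eval a := by
      rw [hf, Polynomial.derivative_mul, Polynomial.eval_add, Polynomial.eval_mul,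
        Polynomial.eval_mul]
      exact dvd_add (Dvd.dvd.mul_left (Int.gcd_dvd_right _ _) _)
        (Dvd.dvd.mul_right (Int.gcd_dvd_left _ _) _)
    exact_mod_cast Int.dvd_coe_gcd h1 h2

lemma admDiv_neg {f : Polynomial ℤ} {a d : ℤ} (h : AdmDiv f a d) : AdmDiv f a (-d) := by
  obtain ⟨h1, h2⟩ := h
  refine ⟨neg_dvd.2 h1, ?_⟩
  rw [show f.eval a / -d = -(f.eval a / d) from Int.ediv_neg _ _, Int.neg_gcd, Int.gcd_neg]
  exact h2

lemma admDiv_abs {f : Polynomial ℤ} {a d : ℤ} (h : AdmDiv f a d) : AdmDiv f a |d| := by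
  rcases abs_choice d with h' | h' <;> rw [h']
  · exact h
  · exact admDiv_neg h

lemma multiset_prod_le_prod {ι : Type*} (s : Multiset ι) (F G : ι → ℝ)
    (h : ∀ θ ∈ s, 0 ≤ F θ ∧ F θ ≤ G θ) :
    (s.map F).prod ≤ (s.map G).prod := by
  induction s using Multiset.induction with
  | empty => simp
  | @cons a t ih =>
      simp only [Multiset.map_cons, Multiset.prod_cons]
      have ha := h a (Multiset.mem_cons_self a t)
      have ht : ∀ θ ∈ t, 0 ≤ F θ ∧ F θ ≤ G θ :=
        fun θ hθ => h θ (Multiset.mem_cons_of_mem hθ)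
      have hF : 0 ≤ (t.map F).prod := by
        apply Multiset.prod_nonneg
        intro x hx
        obtain ⟨θ, hθ, rfl⟩ := Multiset.mem_map.mp hx
        exact (ht θ hθ).1
      exact mul_le_mul ha.2 (ih ht) hF (ha.1.trans ha.2)

lemma multiset_prod_lt_prod {ι : Type*} [DecidableEq ι] {s : Multiset ι} (hs : s ≠ 0)
    (F G : ι → ℝ) (h : ∀ θ ∈ s, 0 < F θ ∧ F θ < G θ) :
    (s.map F).prod < (s.map G).prod := by
  obtain ⟨a, ha⟩ := Multiset.exists_mem_of_ne_zero hs
  obtain ⟨t, rfl⟩ : ∃ t, s = a ::ₘ t := ⟨s.erase a, (Multiset.cons_erase ha).symm⟩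
  simp only [Multiset.map_cons, Multiset.prod_cons]
  have ha' := h a (Multiset.mem_cons_self a t)
  have ht : ∀ θ ∈ t, 0 ≤ F θ ∧ F θ ≤ G θ := fun θ hθ =>
    ⟨(h θ (Multiset.mem_cons_of_mem hθ)).1.le, (h θ (Multiset.mem_cons_of_mem hθ)).2.le⟩
  have hFpos : 0 < (t.map F).prod := by
    apply Multiset.prod_pos
    intro x hx
    obtain ⟨θ, hθ, rfl⟩ := Multiset.mem_map.mp hx
    exact (h θ (Multiset.mem_cons_of_mem hθ)).1
  exact mul_lt_mul ha'.2 (multiset_prod_le_prod t F G ht) hFpos (ha'.1.trans ha'.2).le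

lemma abs_eval_lt (H : Polynomial ℤ) (a b : ℤ) (q : ℝ) (hq : 0 < q)
    (hd : 0 < H.natDegree) (hHa : H.eval a ≠ 0)
    (hroots : ∀ θ : ℂ, (H.map (Int.castRingHom ℂ)).eval θ = 0 →
      q * ‖(a : ℂ) - θ‖ < ‖(b : ℂ) - θ‖) :
    q ^ H.natDegree * |((H.eval a : ℤ) : ℝ)| < |((H.eval b : ℤ) : ℝ)| := by
  set P := H.map (Int.castRingHom ℂ) with hPdef
  have hsplit : P.Splits := IsAlgClosed.splits P
  have hPeq := Polynomial.Splits.eq_prod_roots hsplit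
  have hcard : Multiset.card P.roots = H.natDegree := by
    have h1 := hsplit.natDegree_eq_card_roots
    rw [← h1, hPdef,
      Polynomial.natDegree_map_eq_of_injective (f := Int.castRingHom ℂ) Int.cast_injective]
  have heva : P.eval ((a : ℤ) : ℂ) = ((H.eval a : ℤ) : ℂ) :=
    Polynomial.eval_intCast_map _ _ _
  have hevb : P.eval ((b : ℤ) : ℂ) = ((H.eval b : ℤ) : ℂ) :=
    Polynomial.eval_intCast_map _ _ _
  have key : ∀ x : ℂ, ‖P.eval x‖
      = ‖P.leadingCoeff‖ * (P.roots.map fun θ => ‖x - θ‖).prod := by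
    intro x
    conv_lhs => rw [hPeq]
    rw [Polynomial.eval_mul, Polynomial.eval_C, norm_mul, Polynomial.eval_multiset_prod,
      Multiset.map_map]
    congr 1
    exact (map_multiset_prod (normHom : ℂ →*₀ ℝ) _).trans (by simp [Multiset.map_map, Function.comp])
  have hP0 : P ≠ 0 := by
    intro h0
    apply hHa
    have := heva
    rw [h0] at this
    simp only [Polynomial.eval_zero] at this
    exact_mod_cast this.symm
  have hlead : 0 < ‖P.leadingCoeff‖ :=
    norm_pos_iff.2 (Polynomial.leadingCoeff_ne_zero.2 hP0)
  have hroots' : ∀ θ ∈ P.roots, 0 < q * ‖(a : ℂ) - θ‖ ∧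
      q * ‖(a : ℂ) - θ‖ < ‖(b : ℂ) - θ‖ := by
    intro θ hθ
    have hroot : P.eval θ = 0 := Polynomial.isRoot_of_mem_roots hθ
    refine ⟨?_, hroots θ hroot⟩
    apply mul_pos hq
    rw [norm_pos_iff, sub_ne_zero]
    intro heq
    apply hHa
    rw [← heq] at hroot
    rw [heva] at hroot
    exact_mod_cast hroot
  have hsne : P.roots ≠ 0 := by
    intro h0
    rw [h0] at hcard
    simp at hcard
    omega
  have hlt := multiset_prod_lt_prod hsne (fun θ => q * ‖(a : ℂ) - θ‖)
    (fun θ => ‖(b : ℂ) - θ‖) hroots'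
  have hsplitprod : (P.roots.map fun θ => q * ‖(a : ℂ) - θ‖).prod
      = q ^ H.natDegree * (P.roots.map fun θ => ‖(a : ℂ) - θ‖).prod := by
    rw [Multiset.prod_map_mul]
    congr 1
    rw [Multiset.map_const', Multiset.prod_replicate, hcard]
  rw [hsplitprod] at hlt
  have habsa : |((H.eval a : ℤ) : ℝ)|
      = ‖P.leadingCoeff‖ * (P.roots.map fun θ => ‖(a : ℂ) - θ‖).prod := by
    rw [← key, heva, Complex.norm_intCast]
  have habsb : |((H.eval b : ℤ) : ℝ)|
      = ‖P.leadingCoeff‖ * (P.roots.map fun θ => ‖(b : ℂ) - θ‖).prod := by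
    rw [← key, hevb, Complex.norm_intCast]
  rw [habsa, habsb]
  calc q ^ H.natDegree * (‖P.leadingCoeff‖ *
        (P.roots.map fun θ => ‖(a : ℂ) - θ‖).prod)
      = ‖P.leadingCoeff‖ * (q ^ H.natDegree *
        (P.roots.map fun θ => ‖(a : ℂ) - θ‖).prod) := by ring
    _ < ‖P.leadingCoeff‖ *
        (P.roots.map fun θ => ‖(b : ℂ) - θ‖).prod :=
        mul_lt_mul_of_pos_left hlt hlead

theorem stmt3 (f : Polynomial ℤ) (a b : ℤ) (k : ℕ) (hk : 1 ≤ k)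
    (ha : f.eval a ≠ 0) (hab : |f.eval a| < |f.eval b|)
    (q : ℝ) (hq : IsQk f a b k q) (hq1 : 1 < q)
    (hroots : ∀ θ : ℂ, aeval θ f = 0 →
      q * ‖(a : ℂ) - θ‖ < ‖(b : ℂ) - θ‖) :
    FactorsAtMost f k := by
  intro g hgpos hfg
  have hf0 : f ≠ 0 := fun h => ha (by simp [h])
  obtain ⟨H, hfH, hdeg⟩ := exists_int_factorization f hf0 g hfg
  have hq0 : (0 : ℝ) < q := lt_trans one_pos hq1
  have hb0 : f.eval b ≠ 0 := by
    intro h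
    rw [h] at hab
    simp only [abs_zero] at hab
    exact absurd hab (not_lt.2 (abs_nonneg _))
  set dA : Fin (k+1) → ℤ := fun i => (H i).eval a with hdA_def
  set dB : Fin (k+1) → ℤ := fun i => (H i).eval b with hdB_def
  have hfa : f.eval a = ∏ i, dA i := by rw [hfH, Polynomial.eval_prod]
  have hfb : f.eval b = ∏ i, dB i := by rw [hfH, Polynomial.eval_prod]
  have hdA : ∀ i, dA i ≠ 0 := by
    intro i hi
    exact ha (hfa ▸ Finset.prod_eq_zero (Finset.mem_univ i) hi)
  have hdB : ∀ i, dB i ≠ 0 := by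
    intro i hi
    exact hb0 (hfb ▸ Finset.prod_eq_zero (Finset.mem_univ i) hi)
  have hfactor : ∀ i, f = H i * ∏ j ∈ Finset.univ.erase i, H j := by
    intro i
    rw [hfH, ← Finset.mul_prod_erase _ _ (Finset.mem_univ i)]
  have hadmA : ∀ i, AdmDiv f a (dA i) := fun i => admDiv_of_eq f _ _ a ha (hfactor i)
  have hadmB : ∀ i, AdmDiv f b (dB i) := fun i => admDiv_of_eq f _ _ b hb0 (hfactor i)
  have han : ∀ i, q * |((dA i : ℤ) : ℝ)| < |((dB i : ℤ) : ℝ)| := by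
    intro i
    have hdi : 0 < (H i).natDegree := (hdeg i).symm ▸ hgpos i
    have hrootsi : ∀ θ : ℂ, ((H i).map (Int.castRingHom ℂ)).eval θ = 0 →
        q * ‖(a : ℂ) - θ‖ < ‖(b : ℂ) - θ‖ := by
      intro θ hθ
      apply hroots
      rw [Polynomial.aeval_def, ← Polynomial.eval_map]
      have hmapf : f.map (algebraMap ℤ ℂ) = ∏ j, (H j).map (Int.castRingHom ℂ) := by
        rw [hfH, Polynomial.map_prod, algebraMap_int_eq]
      rw [hmapf, Polynomial.eval_prod]
      exact Finset.prod_eq_zero (Finset.mem_univ i) hθ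
    have h1 := abs_eval_lt (H i) a b q hq0 hdi (hdA i) hrootsi
    calc q * |((dA i : ℤ) : ℝ)| ≤ q ^ (H i).natDegree * |((dA i : ℤ) : ℝ)| := by
          apply mul_le_mul_of_nonneg_right _ (abs_nonneg _)
          calc q = q ^ 1 := (pow_one q).symm
            _ ≤ q ^ (H i).natDegree := pow_le_pow_right₀ hq1.le hdi
      _ < |((dB i : ℤ) : ℝ)| := h1
  set r : Fin (k+1) → ℝ := fun i => |((dB i : ℤ) : ℝ)| / |((dA i : ℤ) : ℝ)| with hr_def
  have hAapos : ∀ i, (0 : ℝ) < |((dA i : ℤ) : ℝ)| := by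
    intro i
    rw [abs_pos]
    exact_mod_cast hdA i
  have hrq : ∀ i, q < r i := by
    intro i
    rw [hr_def]
    dsimp only
    rw [lt_div_iff₀ (hAapos i)]
    exact han i
  obtain ⟨i₀, -, hmin⟩ := Finset.exists_min_image Finset.univ r ⟨0, Finset.mem_univ 0⟩
  have hr0 : 0 < r i₀ := lt_trans hq0 (hrq i₀)
  have hprod_r : ∏ i, r i = |((f.eval b : ℤ) : ℝ)| / |((f.eval a : ℤ) : ℝ)| := by
    rw [hr_def, hfa, hfb]
    push_cast
    rw [Finset.abs_prod, Finset.abs_prod, ← Finset.prod_div_distrib]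
  have hpow : r i₀ ^ (k+1) ≤ ∏ i, r i := by
    calc r i₀ ^ (k+1) = ∏ _i : Fin (k+1), r i₀ := by
          rw [Finset.prod_const, Finset.card_univ, Fintype.card_fin]
      _ ≤ ∏ i, r i := Finset.prod_le_prod (fun _ _ => hr0.le)
          (fun i _ => hmin i (Finset.mem_univ i))
  have hle : r i₀ ≤ (|((f.eval b : ℤ) : ℝ)| / |((f.eval a : ℤ) : ℝ)|) ^ ((k + 1 : ℝ))⁻¹ := by
    rw [← hprod_r]
    have h2 := Real.rpow_le_rpow (pow_nonneg hr0.le _) hpow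
      (by positivity : (0 : ℝ) ≤ ((k : ℝ) + 1)⁻¹)
    rw [← Real.rpow_natCast (r i₀) (k+1), ← Real.rpow_mul hr0.le] at h2
    have hcast : ((k + 1 : ℕ) : ℝ) = (k : ℝ) + 1 := by push_cast; ring
    rw [hcast, mul_inv_cancel₀ (by positivity : ((k : ℝ) + 1) ≠ 0), Real.rpow_one] at h2
    exact h2
  have hmem : r i₀ ∈ {x : ℝ | ∃ d₁ d₂ : ℤ, AdmDiv f a d₁ ∧ AdmDiv f b d₂ ∧
      x = (d₂ : ℝ) / (d₁ : ℝ) ∧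
      x ≤ (|((f.eval b : ℤ) : ℝ)| / |((f.eval a : ℤ) : ℝ)|) ^ ((k + 1 : ℝ))⁻¹} := by
    refine ⟨|dA i₀|, |dB i₀|, admDiv_abs (hadmA i₀), admDiv_abs (hadmB i₀), ?_, hle⟩
    rw [hr_def]
    push_cast [Int.cast_abs]
    rfl
  exact absurd (hq.2 hmem) (not_le.2 (hrq i₀))
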